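/- If S ⊆ ℤ is finite with |S| = k ≥ 1, then the covering multiplicity κ(S) = τ(S)·k satisfies κ(S) ≤ H_k ≤ log k + 1, where τ(S) is the covering density of S in ℤ. -/

import Mathlib

open Pointwise

/-- `τ(S,n)`: the minimal number of integer translates of `S` covering `{1,...,n}`. -/
noncomputable def tauZ (S : Finset ℤ) (n : ℕ) : ℕ :=
  sInf {m | ∃ T : Finset ℤ, T.card = m ∧ Finset.Icc (1 : ℤ) n ⊆ T + S}

/-- The covering density `τ(S)` of a finite set `S ⊂ ℤ`, as the infimum of `τ(S,n)/n`. -/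
noncomputable def covDens (S : Finset ℤ) : ℝ :=
  ⨅ n : ℕ+, (tauZ S n : ℝ) / n

namespace CovAux

/-- ceiling of `k*i/N` as a natural number. -/
def mq (k N i : ℕ) : ℕ := (k * i + (N - 1)) / N

lemma mq_pos {k N i : ℕ} (hk : 1 ≤ k) (hN : 1 ≤ N) (hi : 1 ≤ i) : 1 ≤ mq k N i := by
  rw [mq, Nat.le_div_iff_mul_le hN, one_mul]
  have : 1 ≤ k * i := Nat.one_le_iff_ne_zero.2 (Nat.mul_ne_zero (by omega) (by omega))
  omega

lemma mq_le {k N t u : ℕ} (hN : 1 ≤ N) (h : k * u ≤ N * t) : mq k N u ≤ t := by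
  have : mq k N u < t + 1 := by
    rw [mq, Nat.div_lt_iff_lt_mul (show 0 < N by omega)]
    have : (t + 1) * N = N * t + N := by ring
    omega
  omega

lemma mq_mono {k N : ℕ} : Monotone (mq k N) := fun i j h =>
  Nat.div_le_div_right (by have := Nat.mul_le_mul_left k h; omega)

lemma mq_le_k {k N i : ℕ} (hN : 1 ≤ N) (hi : i ≤ N) : mq k N i ≤ k :=
  mq_le hN (by calc k * i ≤ k * N := Nat.mul_le_mul_left k hi
                _ = N * k := Nat.mul_comm _ _)

lemma mq_fiber {k N i j : ℕ} (hk : 1 ≤ k) (hN : 1 ≤ N) (hj : 1 ≤ j)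
    (h : mq k N i = j) : ((j-1)*N)/k < i ∧ i ≤ (j*N)/k := by
  have h1 : k * i ≤ j * N := by
    have : mq k N i < j + 1 := by omega
    rw [mq, Nat.div_lt_iff_lt_mul (show 0 < N by omega)] at this
    have e : (j + 1) * N = j * N + N := by ring
    omega
  have h2 : (j - 1) * N < k * i := by
    have : j ≤ mq k N i := by omega
    rw [mq, Nat.le_div_iff_mul_le (show 0 < N by omega)] at this
    have e : (j - 1) * N + N = j * N := by
      have : j - 1 + 1 = j := by omega
      calc (j-1)*N + N = (j - 1 + 1) * N := by ring
        _ = j * N := by rw [this]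
    omega
  constructor
  · rw [Nat.div_lt_iff_lt_mul (show 0 < k by omega)]
    calc (j-1)*N < k * i := h2
      _ = i * k := Nat.mul_comm _ _
  · rw [Nat.le_div_iff_mul_le (show 0 < k by omega)]
    calc i * k = k * i := Nat.mul_comm _ _
      _ ≤ j * N := h1

lemma count_lemma (S : Finset ℤ) (hS : S.Nonempty) (n : ℕ) (U : Finset ℤ)
    (hU : U ⊆ Finset.Icc (1:ℤ) n) :
    ∑ c ∈ Finset.Icc (1 - S.max' hS) ((n:ℤ) - S.min' hS),
      (U.filter (fun x => x - c ∈ S)).card = S.card * U.card := by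
  set C := Finset.Icc (1 - S.max' hS) ((n:ℤ) - S.min' hS) with hC
  have key : ∀ x ∈ U, C.filter (fun c => x - c ∈ S) = S.image (fun s => x - s) := by
    intro x hx
    have hx' := Finset.mem_Icc.1 (hU hx)
    ext c
    simp only [Finset.mem_filter, Finset.mem_image]
    constructor
    · rintro ⟨-, hc⟩; exact ⟨x - c, hc, by ring⟩
    · rintro ⟨s, hs, rfl⟩
      refine ⟨Finset.mem_Icc.2 ⟨?_, ?_⟩, by simpa using hs⟩
      · have := S.le_max' s hs; omega
      · have := S.min'_le s hs; omega
  calc ∑ c ∈ C, (U.filter (fun x => x - c ∈ S)).card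
      = ∑ c ∈ C, ∑ x ∈ U, if x - c ∈ S then 1 else 0 := by
        exact Finset.sum_congr rfl fun c _ => Finset.card_filter _ _
    _ = ∑ x ∈ U, ∑ c ∈ C, if x - c ∈ S then 1 else 0 := Finset.sum_comm
    _ = ∑ x ∈ U, (C.filter (fun c => x - c ∈ S)).card := by
        exact Finset.sum_congr rfl fun c _ => (Finset.card_filter _ _).symm
    _ = ∑ x ∈ U, S.card := by
        refine Finset.sum_congr rfl fun x hx => ?_
        rw [key x hx, Finset.card_image_of_injective _ (fun a b h => by omega)]
    _ = S.card * U.card := by rw [Finset.sum_const, smul_eq_mul, Nat.mul_comm]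

lemma greedy (S : Finset ℤ) (hS : S.Nonempty) (n : ℕ) (hn : 1 ≤ n) (hk : 1 ≤ S.card) :
    ∀ u : ℕ, ∀ U : Finset ℤ, U ⊆ Finset.Icc (1:ℤ) n → U.card = u →
    ∃ T : Finset ℤ, U ⊆ T + S ∧
      (T.card : ℝ) ≤ ∑ i ∈ Finset.Ioc 0 u,
        (1:ℝ) / mq S.card (n + (S.max' hS - S.min' hS).toNat) i := by
  set k := S.card with hkdef
  set N := n + (S.max' hS - S.min' hS).toNat with hNdef
  have hab : S.min' hS ≤ S.max' hS := S.min'_le _ (S.max'_mem hS)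
  have hN : 1 ≤ N := by omega
  set C := Finset.Icc (1 - S.max' hS) ((n:ℤ) - S.min' hS) with hC
  have hCcard : C.card = N := by
    rw [hC, Int.card_Icc]
    omega
  intro u
  induction u using Nat.strong_induction_on with
  | _ u IH =>
    intro U hU hUcard
    rcases Nat.eq_zero_or_pos u with rfl | hu
    · refine ⟨∅, ?_, by simp⟩
      rw [Finset.card_eq_zero.1 hUcard]
      exact Finset.empty_subset _
    have hsum := count_lemma S hS n U hU
    have hCne : C.Nonempty := Finset.card_pos.1 (by omega)
    obtain ⟨c, hcC, hc⟩ : ∃ c ∈ C, k * u ≤ N * (U.filter (fun x => x - c ∈ S)).card := by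
      apply Finset.exists_le_of_sum_le hCne
      rw [← hC] at hsum
      rw [Finset.sum_const, ← Finset.mul_sum, hsum, hCcard, hUcard, ← hkdef, smul_eq_mul]
    set V := U.filter (fun x => x - c ∈ S) with hV
    set t := V.card with ht
    have htpos : 1 ≤ t := by
      by_contra h
      have : t = 0 := by omega
      rw [this, Nat.mul_zero] at hc
      have : 1 ≤ k * u := Nat.one_le_iff_ne_zero.2 (Nat.mul_ne_zero (by omega) (by omega))
      omega
    have hVU : V ⊆ U := Finset.filter_subset _ _
    have htu : t ≤ u := hUcard ▸ Finset.card_le_card hVU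
    have hU'card : (U \ V).card = u - t := by
      rw [Finset.card_sdiff_of_subset hVU, hUcard]
    obtain ⟨T', hT'cov, hT'card⟩ := IH (u - t) (by omega) (U \ V)
      (fun x hx => hU (Finset.mem_sdiff.1 hx).1) hU'card
    refine ⟨insert c T', ?_, ?_⟩
    · intro x hx
      by_cases hxc : x - c ∈ S
      · exact Finset.mem_add.2 ⟨c, Finset.mem_insert_self _ _, x - c, hxc, by ring⟩
      · have : x ∈ U \ V := Finset.mem_sdiff.2 ⟨hx, fun h => hxc (Finset.mem_filter.1 h).2⟩
        exact Finset.add_subset_add_right (Finset.subset_insert _ _) (hT'cov this)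
    · have hcard : ((insert c T').card : ℝ) ≤ (T'.card : ℝ) + 1 := by
        have := Finset.card_insert_le c T'
        exact_mod_cast this
      have hsplit : ∑ i ∈ Finset.Ioc 0 (u - t), (1:ℝ) / mq k N i
            + ∑ i ∈ Finset.Ioc (u - t) u, (1:ℝ) / mq k N i
          = ∑ i ∈ Finset.Ioc 0 u, (1:ℝ) / mq k N i :=
        Finset.sum_Ioc_consecutive _ (by omega) (by omega)
      have hone : (1:ℝ) ≤ ∑ i ∈ Finset.Ioc (u - t) u, (1:ℝ) / mq k N i := by
        have hmu : mq k N u ≤ t := mq_le hN hc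
        have hterm : ∀ i ∈ Finset.Ioc (u - t) u, (1:ℝ) / t ≤ 1 / mq k N i := by
          intro i hi
          rcases Finset.mem_Ioc.1 hi with ⟨hi1, hi2⟩
          have h1 : 1 ≤ mq k N i := mq_pos hk hN (by omega)
          have h2 : mq k N i ≤ t := le_trans (mq_mono hi2) hmu
          apply one_div_le_one_div_of_le
          · exact_mod_cast h1
          · exact_mod_cast h2
        calc (1:ℝ) = (Finset.Ioc (u-t) u).card • ((1:ℝ)/t) := by
              rw [Nat.card_Ioc]
              have h3 : u - (u - t) = t := by omega
              rw [h3, nsmul_eq_mul]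
              field_simp
          _ ≤ _ := Finset.card_nsmul_le_sum _ _ _ hterm
      calc ((insert c T').card : ℝ) ≤ (T'.card : ℝ) + 1 := hcard
        _ ≤ (∑ i ∈ Finset.Ioc 0 (u - t), (1:ℝ) / mq k N i) + 1 := by linarith
        _ ≤ (∑ i ∈ Finset.Ioc 0 (u - t), (1:ℝ) / mq k N i)
              + ∑ i ∈ Finset.Ioc (u - t) u, (1:ℝ) / mq k N i := by linarith
        _ = _ := hsplit

lemma sum_mq_bound {k N n : ℕ} (hk : 1 ≤ k) (hN : 1 ≤ N) (hn : n ≤ N) :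
    ∑ i ∈ Finset.Ioc 0 n, (1:ℝ) / mq k N i
      ≤ ((N:ℝ)/k + 1) * ∑ j ∈ Finset.range k, (1:ℝ) / (j + 1) := by
  have hmaps : ∀ i ∈ Finset.Ioc 0 n, mq k N i ∈ Finset.Icc 1 k := by
    intro i hi
    rcases Finset.mem_Ioc.1 hi with ⟨h1, h2⟩
    exact Finset.mem_Icc.2 ⟨mq_pos hk hN h1, mq_le_k hN (by omega)⟩
  rw [← Finset.sum_fiberwise_of_maps_to hmaps]
  have hinner : ∀ j ∈ Finset.Icc 1 k,
      ∑ i ∈ (Finset.Ioc 0 n).filter (fun i => mq k N i = j), (1:ℝ) / mq k N i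
        ≤ ((N:ℝ)/k + 1) * (1 / (j : ℝ)) := by
    intro j hj
    rcases Finset.mem_Icc.1 hj with ⟨hj1, hj2⟩
    set A := ((j-1)*N)/k with hA
    set B := (j*N)/k with hB
    have hsub : (Finset.Ioc 0 n).filter (fun i => mq k N i = j) ⊆ Finset.Ioc A B := by
      intro i hi
      rcases Finset.mem_filter.1 hi with ⟨-, hmq⟩
      exact Finset.mem_Ioc.2 (mq_fiber hk hN hj1 hmq)
    have hAB : A ≤ B := Nat.div_le_div_right (Nat.mul_le_mul_right N (by omega))
    have hcard : ((Finset.Ioc 0 n).filter (fun i => mq k N i = j)).card ≤ B - A :=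
      (Nat.card_Ioc A B) ▸ Finset.card_le_card hsub
    have hBA : ((B:ℝ) - A) ≤ (N:ℝ)/k + 1 := by
      have h1 : (B:ℝ) ≤ (j*N : ℕ) / (k:ℝ) := Nat.cast_div_le
      have h2 : ((j-1)*N : ℕ) < (A + 1) * k :=
        (Nat.div_lt_iff_lt_mul (show 0 < k by omega)).1 (Nat.lt_succ_self A)
      have h2' : (((j-1)*N : ℕ) : ℝ) < ((A:ℝ) + 1) * k := by exact_mod_cast h2
      have hje : (((j-1)*N : ℕ) : ℝ) = ((j:ℝ) - 1) * N := by
        push_cast [Nat.cast_sub hj1]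
        ring
      have hj' : ((j*N : ℕ) : ℝ) = (j:ℝ) * N := by push_cast; ring
      rw [hj'] at h1
      rw [hje] at h2'
      have hkpos : (0:ℝ) < k := by exact_mod_cast hk
      rw [le_div_iff₀ hkpos] at h1
      have hg : ((B:ℝ) - A) * k ≤ (N:ℝ) + k := by nlinarith
      have hg2 : (B:ℝ) - A ≤ ((N:ℝ) + k)/k := by rw [le_div_iff₀ hkpos]; exact hg
      have : ((N:ℝ) + k)/k = (N:ℝ)/k + 1 := by field_simp
      linarith
    have hfib : ∑ i ∈ (Finset.Ioc 0 n).filter (fun i => mq k N i = j), (1:ℝ) / mq k N i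
        = (((Finset.Ioc 0 n).filter (fun i => mq k N i = j)).card : ℝ) * (1 / j) := by
      rw [Finset.sum_congr rfl (fun i hi => by
        rw [(Finset.mem_filter.1 hi).2]), Finset.sum_const, nsmul_eq_mul]
    rw [hfib]
    have hjpos : (0:ℝ) < j := by exact_mod_cast hj1
    have hcard' : ((((Finset.Ioc 0 n).filter (fun i => mq k N i = j)).card : ℝ)) ≤ (N:ℝ)/k + 1 := by
      have hc1 : ((((Finset.Ioc 0 n).filter (fun i => mq k N i = j)).card : ℝ)) ≤ ((B - A : ℕ) : ℝ) := by
        exact_mod_cast hcard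
      have hc2 : ((B - A : ℕ) : ℝ) = (B:ℝ) - A := by
        rw [Nat.cast_sub hAB]
      linarith
    exact mul_le_mul_of_nonneg_right hcard' (by positivity)
  calc ∑ j ∈ Finset.Icc 1 k, ∑ i ∈ (Finset.Ioc 0 n).filter (fun i => mq k N i = j), (1:ℝ) / mq k N i
      ≤ ∑ j ∈ Finset.Icc 1 k, ((N:ℝ)/k + 1) * (1 / (j:ℝ)) := Finset.sum_le_sum hinner
    _ = ((N:ℝ)/k + 1) * ∑ j ∈ Finset.Icc 1 k, 1 / (j:ℝ) := by rw [Finset.mul_sum]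
    _ = ((N:ℝ)/k + 1) * ∑ j ∈ Finset.range k, (1:ℝ) / (j + 1) := by
        congr 1
        rw [show Finset.Icc 1 k = Finset.Ico 1 (k+1) by rw [Finset.Ico_add_one_right_eq_Icc],
          Finset.sum_Ico_eq_sum_range]
        simp only [Nat.add_sub_cancel]
        exact Finset.sum_congr rfl fun i _ => by push_cast; rw [add_comm]

end CovAux

theorem covering_multiplicity_le_harmonic (S : Finset ℤ) (k : ℕ) (hk : S.card = k)
    (hk1 : 1 ≤ k) :
    covDens S * k ≤ ∑ j ∈ Finset.range k, (1 : ℝ) / (j + 1) ∧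
    (∑ j ∈ Finset.range k, (1 : ℝ) / (j + 1)) ≤ Real.log k + 1 := by
  have hS : S.Nonempty := Finset.card_pos.1 (by omega)
  set H : ℝ := ∑ j ∈ Finset.range k, (1 : ℝ) / (j + 1) with hH
  have hH0 : 0 ≤ H := Finset.sum_nonneg fun j _ => by positivity
  have hHharm : H = (harmonic k : ℝ) := by
    rw [hH, harmonic]
    push_cast
    exact Finset.sum_congr rfl fun j _ => (one_div _)
  constructor
  · -- main part
    set D : ℕ := (S.max' hS - S.min' hS).toNat with hD
    have hkR : (0:ℝ) < k := by exact_mod_cast hk1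
    -- key bound for each n
    have key : ∀ n : ℕ+, (tauZ S n : ℝ) ≤ (((n:ℕ) + D : ℝ)/k + 1) * H := by
      intro n
      have hn1 : 1 ≤ (n:ℕ) := n.2
      have hIcc : (Finset.Icc (1:ℤ) (n:ℕ)).card = (n:ℕ) := by
        rw [Int.card_Icc]; omega
      obtain ⟨T, hTcov, hTcard⟩ := CovAux.greedy S hS n hn1 (by omega) (n:ℕ)
        (Finset.Icc (1:ℤ) (n:ℕ)) (le_refl _) hIcc
      have htau : tauZ S n ≤ T.card := Nat.sInf_le ⟨T, rfl, hTcov⟩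
      have hb := CovAux.sum_mq_bound (k := S.card) (N := (n:ℕ) + D) (n := (n:ℕ))
        (by omega) (by omega) (by omega)
      calc (tauZ S n : ℝ) ≤ (T.card : ℝ) := by exact_mod_cast htau
        _ ≤ ∑ i ∈ Finset.Ioc 0 (n:ℕ), (1:ℝ) / CovAux.mq S.card ((n:ℕ) + D) i := hTcard
        _ ≤ ((((n:ℕ) + D : ℕ):ℝ)/(S.card) + 1) * ∑ j ∈ Finset.range S.card, (1:ℝ) / (j + 1) := hb
        _ = (((n:ℕ) + D : ℝ)/k + 1) * H := by rw [hk, ← hH]; push_cast; ring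
    have hbdd : BddBelow (Set.range fun n : ℕ+ => (tauZ S n : ℝ) / n) := by
      refine ⟨0, ?_⟩
      rintro x ⟨n, rfl⟩
      positivity
    -- epsilon argument
    refine le_of_forall_pos_le_add fun ε hε => ?_
    set x : ℝ := H * (D + k) / ε with hx
    set n : ℕ+ := ⟨⌈x⌉₊ + 1, Nat.succ_pos _⟩ with hn
    have hnR : (0:ℝ) < ((n:ℕ):ℝ) := by positivity
    have h1 : covDens S ≤ (tauZ S n : ℝ) / n := ciInf_le hbdd n
    have h2 := key n
    have h3 : covDens S * k ≤ H + H * (D + k) / n := by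
      have hc : covDens S * k ≤ ((tauZ S n : ℝ) / n) * k :=
        mul_le_mul_of_nonneg_right h1 (le_of_lt hkR)
      have hd : ((tauZ S n : ℝ) / n) * k ≤ ((((n:ℕ) + D : ℝ)/k + 1) * H / n) * k :=
        mul_le_mul_of_nonneg_right ((div_le_div_iff_of_pos_right hnR).2 h2) (le_of_lt hkR)
      have he : ((((n:ℕ) + D : ℝ)/k + 1) * H / n) * k = H + H * (D + k) / n := by
        field_simp
        ring
      calc covDens S * k ≤ ((tauZ S n : ℝ) / n) * k := hc
        _ ≤ ((((n:ℕ) + D : ℝ)/k + 1) * H / n) * k := hd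
        _ = H + H * (D + k) / n := he
    have h4 : H * (D + k) / n ≤ ε := by
      have hxn : x ≤ ((n:ℕ):ℝ) := by
        have := Nat.le_ceil x
        have h5 : ((⌈x⌉₊ : ℕ):ℝ) ≤ ((n:ℕ):ℝ) := by
          have : (⌈x⌉₊ : ℕ) ≤ (n:ℕ) := by simp [hn]
          exact_mod_cast this
        linarith
      rw [div_le_iff₀ hnR]
      have : H * (D + k) ≤ x * ε := by
        rw [hx]; field_simp; exact le_rfl
      calc H * (D + k) ≤ x * ε := this
        _ ≤ ((n:ℕ):ℝ) * ε := mul_le_mul_of_nonneg_right hxn (le_of_lt hε)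
        _ = ε * ((n:ℕ):ℝ) := by ring
    linarith
  · -- harmonic ≤ log + 1
    rw [hHharm] at *
    have := harmonic_le_one_add_log k
    rw [hHharm]
    linarith
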